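/- Let D, E be normed spaces, Θ ⊂ ℝ^d open, θ ↦ H_θ a continuously differentiable map from Θ to E with derivative θ ↦ Ḣ_θ (continuous in θ, each Ḣ_θ a bounded linear map ℝ^d → E), and suppose there is a constant C with ‖x‖_E ≤ C‖x‖_D for all x (i.e. the identity D → E is bounded). Then the map φ: D × Θ → E, φ(H,θ) = H − H_θ, is uniformly Hadamard differentiable at every point (H,θ), with derivative (g,h) ↦ g − Ḣ_θ h. -/
import Mathlib


open Filter Topology

/-- Uniform Hadamard differentiability of `φ` at `x₀`, within the domain `S`
(points of the approximating sequences are required to stay in `S`). -/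
def UnifHadamardDiffWithin {D E : Type*} [NormedAddCommGroup D] [NormedSpace ℝ D]
    [NormedAddCommGroup E] [NormedSpace ℝ E]
    (φ : D → E) (S : Set D) (x₀ : D) (L : D →L[ℝ] E) : Prop :=
  ∀ (t : ℕ → ℝ) (xn hn : ℕ → D) (h : D),
    Tendsto t atTop (𝓝 0) → (∀ n, t n ≠ 0) →
    Tendsto xn atTop (𝓝 x₀) → Tendsto hn atTop (𝓝 h) →
    (∀ n, xn n ∈ S) → (∀ n, xn n + t n • hn n ∈ S) →
    Tendsto (fun n => (t n)⁻¹ • (φ (xn n + t n • hn n) - φ (xn n))) atTop (𝓝 (L h))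

/-- If `θ ↦ H_θ` is continuously differentiable on the open set `Θ ⊂ ℝ^d` and the
identity `D → E` is a bounded linear map `ι`, then `φ(H,θ) = ι H − H_θ` is uniformly
Hadamard differentiable at every `(H₀,θ₀)` with `θ₀ ∈ Θ`, with derivative
`(g,h) ↦ ι g − Ḣ_{θ₀} h`. -/
theorem stmt5 {D E : Type*} [NormedAddCommGroup D] [NormedSpace ℝ D]
    [NormedAddCommGroup E] [NormedSpace ℝ E] {d : ℕ}
    (ι : D →L[ℝ] E) (C : ℝ) (hι : ∀ x : D, ‖ι x‖ ≤ C * ‖x‖)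
    (Θ : Set (Fin d → ℝ)) (hΘ : IsOpen Θ)
    (Hmap : (Fin d → ℝ) → E) (Hdot : (Fin d → ℝ) → ((Fin d → ℝ) →L[ℝ] E))
    (hderiv : ∀ θ ∈ Θ, HasFDerivAt Hmap (Hdot θ) θ)
    (hcont : ContinuousOn Hdot Θ)
    (H₀ : D) (θ₀ : Fin d → ℝ) (hθ₀ : θ₀ ∈ Θ) :
    UnifHadamardDiffWithin (fun p : D × (Fin d → ℝ) => ι p.1 - Hmap p.2)
      (Set.univ ×ˢ Θ) (H₀, θ₀)
      (ι.comp (ContinuousLinearMap.fst ℝ D (Fin d → ℝ)) -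
        (Hdot θ₀).comp (ContinuousLinearMap.snd ℝ D (Fin d → ℝ))) := by
  intro t xn hn h ht ht0 hxn hhn _ _
  -- strict differentiability of Hmap at θ₀
  have hev : ∀ᶠ θ' in 𝓝 θ₀, HasFDerivAt Hmap (Hdot θ') θ' :=
    (hΘ.eventually_mem hθ₀).mono fun θ' hθ' => hderiv θ' hθ'
  have hct : ContinuousAt Hdot θ₀ := hcont.continuousAt (hΘ.mem_nhds hθ₀)
  have hstrict : HasStrictFDerivAt Hmap (Hdot θ₀) θ₀ :=
    hasStrictFDerivAt_of_hasFDerivAt_of_continuousAt hev hct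
  -- component limits
  have hθn : Tendsto (fun n => (xn n).2) atTop (𝓝 θ₀) :=
    (continuous_snd.tendsto _).comp hxn
  have hh2 : Tendsto (fun n => (hn n).2) atTop (𝓝 h.2) :=
    (continuous_snd.tendsto _).comp hhn
  have hh1 : Tendsto (fun n => (hn n).1) atTop (𝓝 h.1) :=
    (continuous_fst.tendsto _).comp hhn
  have hth2 : Tendsto (fun n => t n • (hn n).2) atTop (𝓝 0) := by
    have := ht.smul hh2
    simpa using this
  have hpair : Tendsto (fun n => ((xn n).2 + t n • (hn n).2, (xn n).2)) atTop
      (𝓝 (θ₀, θ₀)) := by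
    refine Tendsto.prodMk_nhds ?_ hθn
    simpa using hθn.add hth2
  -- little-o estimate from strict differentiability
  have hA : (fun n => Hmap ((xn n).2 + t n • (hn n).2) - Hmap ((xn n).2) -
      (Hdot θ₀) (t n • (hn n).2)) =o[atTop] fun n => t n • (hn n).2 := by
    have h1 := hstrict.isLittleO.comp_tendsto hpair
    simp only [Function.comp_def, add_sub_cancel_left] at h1
    exact h1
  -- (hn n).2 is bounded, so t n • (hn n).2 = O(t n)
  have hO : (fun n => t n • (hn n).2) =O[atTop] t := by
    obtain ⟨M, hM⟩ := hh2.norm.bddAbove_range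
    have hM : ∀ n, ‖(hn n).2‖ ≤ M := fun n => hM (Set.mem_range_self n)
    exact Asymptotics.isBigO_iff.2 ⟨M, Eventually.of_forall fun n => by
      rw [norm_smul]
      calc ‖t n‖ * ‖(hn n).2‖ ≤ ‖t n‖ * M := by
            exact mul_le_mul_of_nonneg_left (hM n) (norm_nonneg _)
        _ = M * ‖t n‖ := mul_comm _ _⟩
  have hA' := hA.trans_isBigO hO
  have h0 : Tendsto (fun n => (t n)⁻¹ • (Hmap ((xn n).2 + t n • (hn n).2) -
      Hmap ((xn n).2) - (Hdot θ₀) (t n • (hn n).2))) atTop (𝓝 0) :=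
    hA'.tendsto_inv_smul_nhds_zero
  -- rewrite the difference quotient
  have key : ∀ n, (t n)⁻¹ • ((fun p : D × (Fin d → ℝ) => ι p.1 - Hmap p.2)
        (xn n + t n • hn n) - (fun p : D × (Fin d → ℝ) => ι p.1 - Hmap p.2) (xn n))
      = (ι ((hn n).1) - (Hdot θ₀) ((hn n).2)) -
        (t n)⁻¹ • (Hmap ((xn n).2 + t n • (hn n).2) - Hmap ((xn n).2) -
          (Hdot θ₀) (t n • (hn n).2)) := by
    intro n
    simp only [Prod.fst_add, Prod.snd_add, Prod.smul_fst, Prod.smul_snd, map_add, map_smul,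
      smul_sub, smul_add, smul_smul, inv_mul_cancel₀ (ht0 n), one_smul]
    abel
  have hlim : Tendsto (fun n => (ι ((hn n).1) - (Hdot θ₀) ((hn n).2)) -
      (t n)⁻¹ • (Hmap ((xn n).2 + t n • (hn n).2) - Hmap ((xn n).2) -
        (Hdot θ₀) (t n • (hn n).2))) atTop (𝓝 ((ι h.1 - (Hdot θ₀) h.2) - 0)) := by
    refine Tendsto.sub ?_ h0
    exact ((ι.continuous.tendsto _).comp hh1).sub (((Hdot θ₀).continuous.tendsto _).comp hh2)
  simp only [key]
  simpa using hlim
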